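/- Let f(X) = 1 + ∑_{α≠0}(f_α/α!)X^α be a formal power series in N commuting variables over ℚ with constant term 1. Then its multiplicative reciprocal is 1/f(X) = 1 + ∑_{α≠0}(h_α/α!)X^α where for each α ≠ 0: h_α = ∑_{π ∈ P_{[α]}} (−1)^{|π|} |π|! ∏_{Γ∈π} f_{#Γ}, with P_{[α]} the set partitions of [α] = {(i,a): 1 ≤ a ≤ α_i} and #Γ the multi-index counting elements (i,a) ∈ Γ for each i. -/

import Mathlib

open scoped Classical

/-- The set of leaf labels `[α] = {(i,a) : 1 ≤ a ≤ α_i}` of a multi-index `α`. -/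
abbrev Leaves {N : ℕ} (α : Fin N →₀ ℕ) : Type := Σ i : Fin N, Fin (α i)

/-- `#Γ`: the multi-index counting, for each `i`, the elements of `Γ ⊆ [α]` of the form
`(i,a)`. -/
noncomputable def blockIndex {N : ℕ} {α : Fin N →₀ ℕ} (Γ : Finset (Leaves α)) : Fin N →₀ ℕ :=
  Finsupp.equivFunOnFinite.symm fun i => (Γ.filter fun x => x.1 = i).card

/-- `α! = ∏ αᵢ!` as a rational number. -/
def mfactorial {N : ℕ} (α : Fin N →₀ ℕ) : ℚ := α.prod fun _ n => (n.factorial : ℚ)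


section Aux

variable {N : ℕ} {α : Fin N →₀ ℕ}

lemma blockIndex_apply (B : Finset (Leaves α)) (i : Fin N) :
    blockIndex B i = (B.filter fun x => x.1 = i).card := rfl

lemma blockIndex_eq_zero {B : Finset (Leaves α)} : blockIndex B = 0 ↔ B = ∅ := by
  constructor
  · intro h
    rw [Finset.eq_empty_iff_forall_notMem]
    intro x hx
    have h1 : x ∈ B.filter fun y => y.1 = x.1 := Finset.mem_filter.2 ⟨hx, rfl⟩
    have := congrArg (fun φ : Fin N →₀ ℕ => φ x.1) h
    simp only [blockIndex_apply, Finsupp.coe_zero, Pi.zero_apply] at this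
    rw [Finset.card_eq_zero] at this
    simp [this] at h1
  · rintro rfl
    ext i
    simp [blockIndex_apply]

lemma blockIndex_univ : blockIndex (Finset.univ : Finset (Leaves α)) = α := by
  ext i
  rw [blockIndex_apply]
  have : (Finset.univ.filter fun x : Leaves α => x.1 = i)
      = (Finset.univ : Finset (Fin (α i))).image (Sigma.mk i) := by
    ext ⟨j, a⟩
    simp only [Finset.mem_filter, Finset.mem_univ, true_and, Finset.mem_image]
    constructor
    · rintro rfl; exact ⟨a, rfl⟩
    · rintro ⟨b, hb⟩; cases hb; rfl
  rw [this, Finset.card_image_of_injective _ sigma_mk_injective, Finset.card_univ,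
    Fintype.card_fin]

lemma blockIndex_le {B S : Finset (Leaves α)} (h : B ⊆ S) : blockIndex B ≤ blockIndex S := by
  rw [Finsupp.le_iff]
  intro i _
  exact Finset.card_le_card (Finset.filter_subset_filter _ h)

lemma blockIndex_sdiff {B S : Finset (Leaves α)} (h : B ⊆ S) :
    blockIndex (S \ B) = blockIndex S - blockIndex B := by
  ext i
  rw [Finsupp.tsub_apply, blockIndex_apply, blockIndex_apply, blockIndex_apply]
  have : ((S \ B).filter fun x => x.1 = i) = (S.filter fun x => x.1 = i) \ (B.filter fun x => x.1 = i) := by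
    ext x; simp only [Finset.mem_filter, Finset.mem_sdiff]; tauto
  rw [this, Finset.card_sdiff_of_subset (Finset.filter_subset_filter _ h)]

lemma mfactorial_eq (γ : Fin N →₀ ℕ) : mfactorial γ = ∏ i, ((γ i).factorial : ℚ) :=
  Finsupp.prod_fintype _ _ (fun i => by simp)

lemma mfactorial_ne_zero (γ : Fin N →₀ ℕ) : mfactorial γ ≠ 0 := by
  rw [mfactorial_eq]
  exact Finset.prod_ne_zero_iff.2 fun i _ => Nat.cast_ne_zero.2 (Nat.factorial_ne_zero _)

lemma mfactorial_zero : mfactorial (0 : Fin N →₀ ℕ) = 1 := by simp [mfactorial]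

lemma mfactorial_binom {β δ γ : Fin N →₀ ℕ} (h : β + δ = γ) :
    mfactorial γ = (∏ i, ((γ i).choose (β i) : ℚ)) * (mfactorial β * mfactorial δ) := by
  rw [mfactorial_eq, mfactorial_eq, mfactorial_eq, ← Finset.prod_mul_distrib,
    ← Finset.prod_mul_distrib]
  refine Finset.prod_congr rfl fun i _ => ?_
  have hβ : β i ≤ γ i := by
    have := congrArg (fun φ : Fin N →₀ ℕ => φ i) h
    simp only [Finsupp.add_apply] at this
    omega
  have hδ : δ i = γ i - β i := by
    have := congrArg (fun φ : Fin N →₀ ℕ => φ i) h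
    simp only [Finsupp.add_apply] at this
    omega
  rw [hδ]
  have h2 := Nat.choose_mul_factorial_mul_factorial hβ
  rw [← h2]
  push_cast
  ring

lemma card_blockIndex_fiber (S : Finset (Leaves α)) (β : Fin N →₀ ℕ) :
    (S.powerset.filter fun B => blockIndex B = β).card
      = ∏ i, (blockIndex S i).choose (β i) := by
  have key : (S.powerset.filter fun B => blockIndex B = β).card
      = (Fintype.piFinset fun i =>
          Finset.powersetCard (β i) (S.filter fun x => x.1 = i)).card := by
    refine Finset.card_nbij' (fun B => fun i => B.filter fun x => x.1 = i)
      (fun p => Finset.univ.biUnion fun i => p i) ?_ ?_ ?_ ?_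
    · intro B hB
      rw [Finset.mem_coe, Finset.mem_filter, Finset.mem_powerset] at hB
      rw [Finset.mem_coe, Fintype.mem_piFinset]
      intro i
      rw [Finset.mem_powersetCard]
      refine ⟨Finset.filter_subset_filter _ hB.1, ?_⟩
      rw [← blockIndex_apply, hB.2]
    · intro p hp
      rw [Finset.mem_coe, Fintype.mem_piFinset] at hp
      have hmem : ∀ i, ∀ x ∈ p i, x ∈ S ∧ x.1 = i := by
        intro i x hx
        have := (Finset.mem_powersetCard.1 (hp i)).1 hx
        exact ⟨(Finset.filter_subset _ _) this, (Finset.mem_filter.1 this).2⟩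
      have hfilter : ∀ i, ((Finset.univ.biUnion fun j => p j).filter fun x => x.1 = i) = p i := by
        intro i
        ext x
        simp only [Finset.mem_filter, Finset.mem_biUnion, Finset.mem_univ, true_and]
        constructor
        · rintro ⟨⟨j, hj⟩, hx1⟩
          obtain rfl : j = i := ((hmem j x hj).2).symm.trans hx1
          exact hj
        · intro hx
          exact ⟨⟨i, hx⟩, (hmem i x hx).2⟩
      rw [Finset.mem_coe, Finset.mem_filter, Finset.mem_powerset]
      constructor
      · intro x hx
        obtain ⟨i, _, hi⟩ := Finset.mem_biUnion.1 hx
        exact (hmem i x hi).1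
      · ext i
        rw [blockIndex_apply, hfilter i]
        exact (Finset.mem_powersetCard.1 (hp i)).2
    · intro B _
      ext x
      simp only [Finset.mem_biUnion, Finset.mem_univ, true_and, Finset.mem_filter]
      constructor
      · rintro ⟨i, hx, _⟩; exact hx
      · intro hx; exact ⟨x.1, hx, rfl⟩
    · intro p hp
      rw [Finset.mem_coe, Fintype.mem_piFinset] at hp
      have hmem : ∀ i, ∀ x ∈ p i, x ∈ S ∧ x.1 = i := by
        intro i x hx
        have := (Finset.mem_powersetCard.1 (hp i)).1 hx
        exact ⟨(Finset.filter_subset _ _) this, (Finset.mem_filter.1 this).2⟩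
      funext i
      ext x
      simp only [Finset.mem_filter, Finset.mem_biUnion, Finset.mem_univ, true_and]
      constructor
      · rintro ⟨⟨j, hj⟩, hx1⟩
        obtain rfl : j = i := ((hmem j x hj).2).symm.trans hx1
        exact hj
      · intro hx
        exact ⟨⟨i, hx⟩, (hmem i x hx).2⟩
  rw [key, Fintype.card_piFinset]
  refine Finset.prod_congr rfl fun i _ => ?_
  rw [Finset.card_powersetCard, ← blockIndex_apply]

lemma avoid_parts_of_mem {ι : Type*} [DecidableEq ι] {s : Finset ι} (P : Finpartition s)
    {Γ : Finset ι} (hΓ : Γ ∈ P.parts) : (P.avoid Γ).parts = P.parts.erase Γ := by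
  ext c
  rw [Finpartition.mem_avoid, Finset.mem_erase]
  constructor
  · rintro ⟨d, hd, hdΓ, rfl⟩
    have hne : d ≠ Γ := fun h => hdΓ (h ▸ le_refl _)
    have hdis : Disjoint d Γ := P.disjoint hd hΓ hne
    rw [hdis.sdiff_eq_left]
    exact ⟨hne, hd⟩
  · rintro ⟨hne, hc⟩
    have hdis : Disjoint c Γ := P.disjoint hc hΓ hne
    refine ⟨c, hc, fun hle => P.ne_bot hc (le_bot_iff.1 (hdis le_rfl hle)), hdis.sdiff_eq_left⟩

lemma extend_avoid {ι : Type*} [DecidableEq ι] {s B : Finset ι}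
    (π' : Finpartition (s \ B)) (hB : B ≠ ⊥) (hdis : Disjoint (s \ B) B)
    (hsup : (s \ B) ⊔ B = s) :
    (π'.extend hB hdis hsup).avoid B = π' := by
  have hBne : B.Nonempty := by
    rw [Finset.nonempty_iff_ne_empty, ← Finset.bot_eq_empty]; exact hB
  have hBnotmem : B ∉ π'.parts := by
    intro hmem
    obtain ⟨x, hx⟩ := hBne
    have := (π'.le hmem) hx
    rw [Finset.mem_sdiff] at this
    exact this.2 hx
  have hmem2 : B ∈ (π'.extend hB hdis hsup).parts := by
    simp only [Finpartition.extend_parts]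
    exact Finset.mem_insert_self _ _
  have hparts := avoid_parts_of_mem _ hmem2
  rw [Finpartition.extend_parts, Finset.erase_insert hBnotmem] at hparts
  exact Finpartition.ext hparts

lemma avoid_extend {ι : Type*} [DecidableEq ι] {s Γ : Finset ι} (π : Finpartition s)
    (hΓ : Γ ∈ π.parts) (hb : Γ ≠ ⊥) (hdis : Disjoint (s \ Γ) Γ)
    (hsup : (s \ Γ) ⊔ Γ = s) :
    (π.avoid Γ).extend hb hdis hsup = π := by
  refine Finpartition.ext ?_
  simp only [Finpartition.extend_parts, avoid_parts_of_mem π hΓ]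
  exact Finset.insert_erase hΓ

lemma partition_sum_rec {ι : Type*} [DecidableEq ι] {s : Finset ι} (hs : s.Nonempty)
    (v : Finset ι → ℚ) :
    (∑ π : Finpartition s,
        (-1 : ℚ) ^ π.parts.card * (π.parts.card.factorial : ℚ) * ∏ Γ ∈ π.parts, v Γ)
      = -∑ B ∈ s.powerset.filter (fun B => B ≠ ∅),
          v B * ∑ π : Finpartition (s \ B),
            (-1 : ℚ) ^ π.parts.card * (π.parts.card.factorial : ℚ) * ∏ Γ ∈ π.parts, v Γ := by
  classical
  have hsne : s ≠ ⊥ := by rw [Finset.bot_eq_empty]; exact hs.ne_empty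
  -- step 1: expand k! = ∑ over parts of (k-1)!
  have step1 : ∀ π : Finpartition s,
      (-1 : ℚ) ^ π.parts.card * (π.parts.card.factorial : ℚ) * ∏ Γ ∈ π.parts, v Γ
        = ∑ Γ ∈ π.parts,
            (-1 : ℚ) ^ π.parts.card * ((π.parts.card - 1).factorial : ℚ) * ∏ Γ' ∈ π.parts, v Γ' := by
    intro π
    rw [Finset.sum_const, nsmul_eq_mul]
    have hpos : 0 < π.parts.card := Finset.card_pos.2 (π.parts_nonempty hsne)
    have : (π.parts.card : ℚ) * ((π.parts.card - 1).factorial : ℚ)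
        = (π.parts.card.factorial : ℚ) := by
      rw [← Nat.cast_mul, Nat.mul_factorial_pred hpos.ne']
    rw [← this]
    ring
  rw [Finset.sum_congr rfl fun π _ => step1 π]
  -- turn into a sigma sum
  rw [show (∑ π : Finpartition s, ∑ Γ ∈ π.parts,
      (-1 : ℚ) ^ π.parts.card * ((π.parts.card - 1).factorial : ℚ) * ∏ Γ' ∈ π.parts, v Γ')
    = ∑ x ∈ (Finset.univ : Finset (Finpartition s)).sigma (fun π => π.parts),
        (-1 : ℚ) ^ x.1.parts.card * ((x.1.parts.card - 1).factorial : ℚ)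
          * ∏ Γ' ∈ x.1.parts, v Γ' from Finset.sum_sigma' _ _ _]
  rw [← Finset.sum_neg_distrib]
  rw [show (∑ B ∈ s.powerset.filter (fun B => B ≠ ∅),
      -(v B * ∑ π : Finpartition (s \ B),
        (-1 : ℚ) ^ π.parts.card * (π.parts.card.factorial : ℚ) * ∏ Γ ∈ π.parts, v Γ))
    = ∑ B ∈ s.powerset.filter (fun B => B ≠ ∅), ∑ π ∈ (Finset.univ : Finset (Finpartition (s \ B))),
        -(v B * ((-1 : ℚ) ^ π.parts.card * (π.parts.card.factorial : ℚ) * ∏ Γ ∈ π.parts, v Γ))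
      from Finset.sum_congr rfl fun B _ => by
        rw [Finset.mul_sum]; exact (Finset.sum_neg_distrib _).symm]
  rw [show (∑ B ∈ s.powerset.filter (fun B => B ≠ ∅),
        ∑ π ∈ (Finset.univ : Finset (Finpartition (s \ B))),
        -(v B * ((-1 : ℚ) ^ π.parts.card * (π.parts.card.factorial : ℚ) * ∏ Γ ∈ π.parts, v Γ)))
    = ∑ y ∈ (s.powerset.filter (fun B => B ≠ ∅)).sigma
          (fun B => (Finset.univ : Finset (Finpartition (s \ B)))),
        -(v y.1 * ((-1 : ℚ) ^ y.2.parts.card * (y.2.parts.card.factorial : ℚ)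
            * ∏ Γ ∈ y.2.parts, v Γ)) from Finset.sum_sigma' _ _ _]
  -- the bijection
  refine Finset.sum_bij' (i := fun x hx => (⟨x.2, x.1.avoid x.2⟩ : Σ B : Finset ι, Finpartition (s \ B)))
    (j := ?_) ?_ ?_ ?_ ?_ ?_
  · -- j
    intro y hy
    rw [Finset.mem_sigma, Finset.mem_filter, Finset.mem_powerset] at hy
    have hB : y.1 ≠ (⊥ : Finset ι) := by rw [Finset.bot_eq_empty]; exact hy.1.2
    have hdis : Disjoint (s \ y.1) y.1 := Finset.sdiff_disjoint
    have hsup : (s \ y.1) ⊔ y.1 = s := by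
      rw [Finset.sup_eq_union, Finset.sdiff_union_of_subset hy.1.1]
    exact ⟨y.2.extend hB hdis hsup, y.1⟩
  · -- hi
    rintro ⟨π, Γ⟩ hx
    rw [Finset.mem_sigma] at hx ⊢
    refine ⟨Finset.mem_filter.2 ⟨Finset.mem_powerset.2 (π.le hx.2), ?_⟩, Finset.mem_univ _⟩
    have := π.ne_bot hx.2
    rwa [Finset.bot_eq_empty] at this
  · -- hj
    rintro ⟨B, π'⟩ hy
    rw [Finset.mem_sigma]
    refine ⟨Finset.mem_univ _, ?_⟩
    simp only [Finpartition.extend_parts]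
    exact Finset.mem_insert_self _ _
  · -- left_inv
    rintro ⟨π, Γ⟩ hx
    rw [Finset.mem_sigma] at hx
    refine Sigma.ext ?_ (heq_of_eq rfl)
    exact avoid_extend π hx.2 (π.ne_bot hx.2) Finset.sdiff_disjoint
      (by rw [Finset.sup_eq_union, Finset.sdiff_union_of_subset (π.le hx.2)])
  · -- right_inv
    rintro ⟨B, π'⟩ hy
    rw [Finset.mem_sigma, Finset.mem_filter, Finset.mem_powerset] at hy
    refine Sigma.ext rfl (heq_of_eq ?_)
    exact extend_avoid π' (by rw [Finset.bot_eq_empty]; exact hy.1.2) Finset.sdiff_disjoint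
      (by rw [Finset.sup_eq_union, Finset.sdiff_union_of_subset hy.1.1])
  · -- values
    rintro ⟨π, Γ⟩ hx
    rw [Finset.mem_sigma] at hx
    have hΓ : Γ ∈ π.parts := hx.2
    have hpos : 0 < π.parts.card := Finset.card_pos.2 ⟨Γ, hΓ⟩
    dsimp only
    rw [avoid_parts_of_mem π hΓ, Finset.card_erase_of_mem hΓ,
      ← Finset.mul_prod_erase _ _ hΓ]
    have hk : ((-1 : ℚ)) ^ π.parts.card = -(-1 : ℚ) ^ (π.parts.card - 1) := by
      conv_lhs => rw [show π.parts.card = (π.parts.card - 1) + 1 from by omega]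
      rw [pow_succ]; ring
    rw [hk]
    ring

section Main

variable (fc : (Fin N →₀ ℕ) → ℚ) (f g : MvPowerSeries (Fin N) ℚ)

lemma coeff_g_zero (hfg : f * g = 1)
    (hf0 : MvPowerSeries.coeff (0 : Fin N →₀ ℕ) f = 1) :
    MvPowerSeries.coeff (0 : Fin N →₀ ℕ) g = 1 := by
  have h0 : MvPowerSeries.coeff (0 : Fin N →₀ ℕ) (f * g) = 1 := by
    rw [hfg]; simp
  rw [MvPowerSeries.coeff_mul, Finsupp.antidiagonal_zero, Finset.sum_singleton, hf0, one_mul] at h0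
  exact h0

lemma coeff_g_rec (hfg : f * g = 1)
    (hf : ∀ α, MvPowerSeries.coeff α f = if α = 0 then 1 else (mfactorial α)⁻¹ * fc α)
    (γ : Fin N →₀ ℕ) (hγ : γ ≠ 0) :
    MvPowerSeries.coeff γ g
      = -∑ p ∈ (Finset.HasAntidiagonal.antidiagonal γ).erase ((0 : Fin N →₀ ℕ), γ),
          (mfactorial p.1)⁻¹ * fc p.1 * MvPowerSeries.coeff p.2 g := by
  have h0 : MvPowerSeries.coeff γ (f * g) = 0 := by
    rw [hfg, MvPowerSeries.coeff_one, if_neg hγ]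
  rw [MvPowerSeries.coeff_mul] at h0
  have hmem : ((0 : Fin N →₀ ℕ), γ) ∈ Finset.HasAntidiagonal.antidiagonal γ := by
    rw [Finset.HasAntidiagonal.mem_antidiagonal, zero_add]
  rw [← Finset.add_sum_erase _ _ hmem] at h0
  have h1 : MvPowerSeries.coeff (0 : Fin N →₀ ℕ) f = 1 := by rw [hf 0, if_pos rfl]
  rw [h1, one_mul] at h0
  have key : ∀ p ∈ (Finset.HasAntidiagonal.antidiagonal γ).erase ((0 : Fin N →₀ ℕ), γ),
      MvPowerSeries.coeff p.1 f * MvPowerSeries.coeff p.2 g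
        = (mfactorial p.1)⁻¹ * fc p.1 * MvPowerSeries.coeff p.2 g := by
    intro p hp
    rw [Finset.mem_erase, Finset.HasAntidiagonal.mem_antidiagonal] at hp
    have hp1 : p.1 ≠ 0 := by
      intro h
      apply hp.1
      have h2 : p.2 = γ := by rw [← hp.2, h, zero_add]
      exact Prod.ext h h2
    rw [hf p.1, if_neg hp1]
  rw [Finset.sum_congr rfl key] at h0
  linarith

lemma key_induction (hfg : f * g = 1)
    (hf : ∀ α, MvPowerSeries.coeff α f = if α = 0 then 1 else (mfactorial α)⁻¹ * fc α)
    {α : Fin N →₀ ℕ} :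
    ∀ S : Finset (Leaves α),
      (∑ π : Finpartition S,
        (-1 : ℚ) ^ π.parts.card * (π.parts.card.factorial : ℚ)
          * ∏ Γ ∈ π.parts, fc (blockIndex Γ))
        = mfactorial (blockIndex S) * MvPowerSeries.coeff (blockIndex S) g := by
  refine Finset.strongInduction ?_
  intro S ih
  by_cases hS : S = ∅
  · subst hS
    have hparts : ∀ π : Finpartition (∅ : Finset (Leaves α)), π.parts = ∅ :=
      fun π => Finpartition.parts_eq_empty_iff.2 Finset.bot_eq_empty.symm
    have hbI : blockIndex (∅ : Finset (Leaves α)) = 0 := blockIndex_eq_zero.2 rfl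
    have hg0 : MvPowerSeries.coeff (0 : Fin N →₀ ℕ) g = 1 :=
      coeff_g_zero f g hfg (by rw [hf 0, if_pos rfl])
    rw [hbI, mfactorial_zero, hg0, mul_one]
    have hone : ∀ π : Finpartition (∅ : Finset (Leaves α)),
        (-1 : ℚ) ^ π.parts.card * (π.parts.card.factorial : ℚ)
          * ∏ Γ ∈ π.parts, fc (blockIndex Γ) = 1 := by
      intro π
      rw [hparts π]
      simp
    rw [Finset.sum_congr rfl fun π _ => hone π, Finset.sum_const, Finset.card_univ]
    have hcard : Fintype.card (Finpartition (∅ : Finset (Leaves α))) = 1 := by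
      rw [Fintype.card_eq_one_iff]
      refine ⟨⟨∅, Finset.supIndep_empty _, by rw [Finset.sup_empty, Finset.bot_eq_empty],
        Finset.notMem_empty _⟩, fun π => Finpartition.ext (hparts π)⟩
    rw [hcard, one_smul]
  · have hSne : S.Nonempty := Finset.nonempty_iff_ne_empty.2 hS
    set γ := blockIndex S with hγdef
    have hγ : γ ≠ 0 := fun h => hS (blockIndex_eq_zero.1 h)
    rw [partition_sum_rec hSne]
    have hIH : ∀ B ∈ S.powerset.filter (fun B => B ≠ ∅),
        fc (blockIndex B) * ∑ π : Finpartition (S \ B),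
          (-1 : ℚ) ^ π.parts.card * (π.parts.card.factorial : ℚ)
            * ∏ Γ ∈ π.parts, fc (blockIndex Γ)
        = fc (blockIndex B) * (mfactorial (γ - blockIndex B)
            * MvPowerSeries.coeff (γ - blockIndex B) g) := by
      intro B hB
      rw [Finset.mem_filter, Finset.mem_powerset] at hB
      have hsub : S \ B ⊂ S :=
        Finset.sdiff_ssubset hB.1 (Finset.nonempty_iff_ne_empty.2 hB.2)
      rw [ih _ hsub, blockIndex_sdiff hB.1]
    rw [Finset.sum_congr rfl hIH]
    rw [coeff_g_rec fc f g hfg hf γ hγ, mul_neg, neg_inj, Finset.mul_sum]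
    -- fiberwise grouping
    have hmaps : ∀ B ∈ S.powerset.filter (fun B => B ≠ ∅),
        ((blockIndex B, γ - blockIndex B) : (Fin N →₀ ℕ) × (Fin N →₀ ℕ))
          ∈ (Finset.HasAntidiagonal.antidiagonal γ).erase ((0 : Fin N →₀ ℕ), γ) := by
      intro B hB
      rw [Finset.mem_filter, Finset.mem_powerset] at hB
      rw [Finset.mem_erase, Finset.HasAntidiagonal.mem_antidiagonal]
      constructor
      · intro h
        have h1 := congrArg Prod.fst h
        simp only at h1
        exact hB.2 (blockIndex_eq_zero.1 h1)
      · exact add_tsub_cancel_of_le (blockIndex_le hB.1)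
    rw [← Finset.sum_fiberwise_of_maps_to hmaps]
    refine Finset.sum_congr rfl fun p hp => ?_
    rw [Finset.mem_erase, Finset.HasAntidiagonal.mem_antidiagonal] at hp
    have hp1 : p.1 ≠ 0 := by
      intro h
      apply hp.1
      have h2 : p.2 = γ := by rw [← hp.2, h, zero_add]
      exact Prod.ext h h2
    have hp2 : p.2 = γ - p.1 := by
      ext i
      have := congrArg (fun φ : Fin N →₀ ℕ => φ i) hp.2
      simp only [Finsupp.add_apply] at this
      rw [Finsupp.tsub_apply]
      omega
    have hfiber : (S.powerset.filter (fun B => B ≠ ∅)).filter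
        (fun B => ((blockIndex B, γ - blockIndex B) : _ × _) = p)
        = S.powerset.filter (fun B => blockIndex B = p.1) := by
      ext B
      simp only [Finset.mem_filter, Finset.mem_powerset]
      constructor
      · rintro ⟨⟨h1, _⟩, h3⟩
        exact ⟨h1, congrArg Prod.fst h3⟩
      · rintro ⟨h1, h2⟩
        refine ⟨⟨h1, fun hBe => hp1 (by rw [← h2, hBe, blockIndex_eq_zero.2 rfl])⟩, ?_⟩
        rw [h2, ← hp2]
    rw [hfiber]
    -- inner sum constant
    have hconst : ∀ B ∈ S.powerset.filter (fun B => blockIndex B = p.1),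
        fc (blockIndex B) * (mfactorial (γ - blockIndex B)
            * MvPowerSeries.coeff (γ - blockIndex B) g)
        = fc p.1 * (mfactorial p.2 * MvPowerSeries.coeff p.2 g) := by
      intro B hB
      rw [Finset.mem_filter] at hB
      rw [hB.2, ← hp2]
    rw [Finset.sum_congr rfl hconst, Finset.sum_const, card_blockIndex_fiber, nsmul_eq_mul]
    -- numeric identity
    have hbinom := mfactorial_binom (β := p.1) (δ := p.2) hp.2
    have hmfne : mfactorial p.1 ≠ 0 := mfactorial_ne_zero p.1
    rw [Nat.cast_prod]
    rw [hbinom]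
    field_simp
    ring

end Main


end Aux

/-- partition formula for the reciprocal of a multivariate power series with
constant term `1`.  If `f(X) = 1 + ∑_{α≠0} (f_α/α!) X^α` and `f·g = 1`, then
`g(X) = 1 + ∑_{α≠0} (h_α/α!) X^α` with
`h_α = ∑_{π ∈ P_{[α]}} (-1)^{|π|} |π|! ∏_{Γ ∈ π} f_{#Γ}`. -/
theorem reciprocal_partition_formula {N : ℕ} (fc : (Fin N →₀ ℕ) → ℚ)
    (f g : MvPowerSeries (Fin N) ℚ)
    (hf : ∀ α, MvPowerSeries.coeff α f =
      if α = 0 then 1 else (mfactorial α)⁻¹ * fc α)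
    (hfg : f * g = 1) :
    ∀ α : Fin N →₀ ℕ, α ≠ 0 →
      MvPowerSeries.coeff α g =
        (mfactorial α)⁻¹ *
          ∑ π : Finpartition (Finset.univ : Finset (Leaves α)),
            (-1 : ℚ) ^ π.parts.card * (π.parts.card.factorial : ℚ) *
              ∏ Γ ∈ π.parts, fc (blockIndex Γ) := by
  intro α hα
  have h := key_induction fc f g hfg hf (Finset.univ : Finset (Leaves α))
  rw [blockIndex_univ] at h
  rw [h, inv_mul_cancel_left₀ (mfactorial_ne_zero α)]
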